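/- Let N ≥ 1 and let M_t and M_r be N×N complex positive semidefinite Hermitian matrices, and let c_t > 0, c_r > 0 and P_A > 0 be real numbers. If there exists an N×N complex positive semidefinite Hermitian matrix V such that Re(Tr(V)) ≤ P_A, Re(Tr(V M_t)) ≥ c_t and Re(Tr(V M_r)) ≥ c_r, then there exists a vector v ∈ ℂ^N such that ‖v‖² ≤ P_A, Re(vᴴ M_t v) ≥ c_t and Re(vᴴ M_r v) ≥ c_r; that is, the feasibility system admits a rank-one solution V = v vᴴ. -/

import Mathlib

open scoped Matrix ComplexOrder
open Complex

set_option linter.unusedSectionVars false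
set_option linter.unusedVariables false
set_option maxHeartbeats 800000

section Aux

variable {n : Type*} [Fintype n] [DecidableEq n]

/-- The sesquilinear form associated with a matrix. -/
noncomputable def sf {n : Type*} [Fintype n] (M : Matrix n n ℂ) (x y : n → ℂ) : ℂ :=
  star x ⬝ᵥ M.mulVec y

/-- The (real part of the) quadratic form associated with a matrix. -/
noncomputable def qf {n : Type*} [Fintype n] (M : Matrix n n ℂ) (x : n → ℂ) : ℝ :=
  (sf M x x).re

lemma sf_conj {M : Matrix n n ℂ} (hM : M.IsHermitian) (x y : n → ℂ) :
    sf M y x = starRingEnd ℂ (sf M x y) := by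
  unfold sf
  simp only [dotProduct, Matrix.mulVec, map_sum, map_mul, Pi.star_apply,
    Finset.mul_sum, starRingEnd_apply, star_star]
  rw [Finset.sum_comm]
  refine Finset.sum_congr rfl fun i _ => ?_
  refine Finset.sum_congr rfl fun j _ => ?_
  have hM' : star (M j i) = M i j := by
    have := congrFun (congrFun hM i) j
    simpa [Matrix.conjTranspose_apply] using this
  rw [← hM']
  rw [star_star]; ring

lemma sf_add_left (M : Matrix n n ℂ) (x y z : n → ℂ) :
    sf M (x + y) z = sf M x z + sf M y z := by
  unfold sf; rw [star_add, add_dotProduct]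

lemma sf_add_right (M : Matrix n n ℂ) (x y z : n → ℂ) :
    sf M x (y + z) = sf M x y + sf M x z := by
  unfold sf; rw [Matrix.mulVec_add, dotProduct_add]

lemma sf_smul_left (M : Matrix n n ℂ) (a : ℂ) (x y : n → ℂ) :
    sf M (a • x) y = starRingEnd ℂ a * sf M x y := by
  unfold sf
  rw [star_smul, smul_dotProduct, smul_eq_mul]
  rfl

lemma sf_smul_right (M : Matrix n n ℂ) (a : ℂ) (x y : n → ℂ) :
    sf M x (a • y) = a * sf M x y := by
  unfold sf
  rw [Matrix.mulVec_smul, dotProduct_smul, smul_eq_mul]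

lemma sf_matrix_add (M K : Matrix n n ℂ) (x y : n → ℂ) :
    sf (M + K) x y = sf M x y + sf K x y := by
  unfold sf; rw [Matrix.add_mulVec, dotProduct_add]

lemma sf_matrix_smul (a : ℂ) (M : Matrix n n ℂ) (x y : n → ℂ) :
    sf (a • M) x y = a * sf M x y := by
  unfold sf
  rw [Matrix.smul_mulVec, dotProduct_smul, smul_eq_mul]

lemma qf_matrix_add (M K : Matrix n n ℂ) (x : n → ℂ) :
    qf (M + K) x = qf M x + qf K x := by
  unfold qf; rw [sf_matrix_add, Complex.add_re]

lemma qf_matrix_smul (a : ℝ) (M : Matrix n n ℂ) (x : n → ℂ) :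
    qf ((a : ℂ) • M) x = a * qf M x := by
  unfold qf; rw [sf_matrix_smul, Complex.re_ofReal_mul]

lemma conj_mul_self (a : ℂ) : starRingEnd ℂ a * a = ((‖a‖ ^ 2 : ℝ) : ℂ) := by
  rw [mul_comm, Complex.mul_conj]
  norm_cast
  rw [Complex.normSq_eq_norm_sq]

lemma qf_one (x : n → ℂ) : qf 1 x = ∑ i, ‖x i‖ ^ 2 := by
  unfold qf sf
  rw [Matrix.one_mulVec]
  simp only [dotProduct, Pi.star_apply, Complex.re_sum]
  refine Finset.sum_congr rfl fun i _ => ?_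
  have : star (x i) * x i = ((‖x i‖ ^ 2 : ℝ) : ℂ) := conj_mul_self (x i)
  rw [this, Complex.ofReal_re]

lemma qf_zero_vec (M : Matrix n n ℂ) : qf M (0 : n → ℂ) = 0 := by
  unfold qf sf
  simp

lemma qf_smul (M : Matrix n n ℂ) (a : ℂ) (x : n → ℂ) :
    qf M (a • x) = ‖a‖ ^ 2 * qf M x := by
  unfold qf
  rw [sf_smul_left, sf_smul_right, ← mul_assoc, conj_mul_self, Complex.re_ofReal_mul]

lemma qf_expand {M : Matrix n n ℂ} (hM : M.IsHermitian) (a b : ℂ) (x y : n → ℂ) :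
    qf M (a • x + b • y)
      = ‖a‖ ^ 2 * qf M x + ‖b‖ ^ 2 * qf M y + 2 * (starRingEnd ℂ a * b * sf M x y).re := by
  unfold qf
  rw [sf_add_left, sf_add_right, sf_add_right]
  rw [sf_smul_left, sf_smul_left, sf_smul_right, sf_smul_right, sf_smul_right, sf_smul_right]
  rw [sf_smul_left, sf_smul_left]
  have h1 : starRingEnd ℂ a * (a * sf M x x) = ((‖a‖^2:ℝ):ℂ) * sf M x x := by
    rw [← mul_assoc, conj_mul_self]
  have h2 : b * (starRingEnd ℂ b * sf M y y) = ((‖b‖^2:ℝ):ℂ) * sf M y y := by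
    rw [← mul_assoc, mul_comm b (starRingEnd ℂ b), conj_mul_self]
  have h3 : sf M y x = starRingEnd ℂ (sf M x y) := sf_conj hM x y
  rw [h1, h2, h3]
  simp only [Complex.add_re, Complex.re_ofReal_mul]
  have h4 : (a * (starRingEnd ℂ b * starRingEnd ℂ (sf M x y))).re
      = (starRingEnd ℂ a * (b * sf M x y)).re := by
    have : a * (starRingEnd ℂ b * starRingEnd ℂ (sf M x y))
        = starRingEnd ℂ (starRingEnd ℂ a * (b * sf M x y)) := by
      simp only [map_mul, RingHomCompTriple.comp_apply, RingHom.id_apply, Complex.conj_conj]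
    rw [this, Complex.conj_re]
  rw [h4]
  ring

lemma choose_c (β δ : ℂ) : ∃ c : ℂ, ‖c‖ = 1 ∧ (c * β).re = 0 ∧ 0 ≤ (c * δ).re := by
  by_cases hβ : β = 0
  · by_cases hδ : δ = 0
    · exact ⟨1, by simp, by simp [hβ], by simp [hδ]⟩
    · refine ⟨starRingEnd ℂ δ / ↑‖δ‖, ?_, by simp [hβ], ?_⟩
      · rw [norm_div]
        simp [Complex.norm_conj, hδ]
      · rw [div_mul_eq_mul_div, mul_comm, Complex.mul_conj, Complex.div_ofReal_re,
          Complex.ofReal_re]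
        exact div_nonneg (Complex.normSq_nonneg δ) (norm_nonneg δ)
  · set c0 : ℂ := Complex.I * starRingEnd ℂ β / ↑‖β‖ with hc0
    have hnc0 : ‖c0‖ = 1 := by
      rw [hc0, norm_div, norm_mul]
      simp [Complex.norm_conj, hβ]
    have hre : (c0 * β).re = 0 := by
      rw [hc0, div_mul_eq_mul_div, mul_assoc, mul_comm (starRingEnd ℂ β) β, Complex.mul_conj]
      simp
    by_cases hsign : 0 ≤ (c0 * δ).re
    · exact ⟨c0, hnc0, hre, hsign⟩
    · refine ⟨-c0, by simp [hnc0], by simp [hre], ?_⟩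
      simp only [neg_mul, Complex.neg_re]
      linarith

lemma qf_u {M : Matrix n n ℂ} (hM : M.IsHermitian) (c : ℂ) (hc : ‖c‖ = 1)
    (x y : n → ℂ) (s : ℝ) :
    qf M ((Real.cos s : ℂ) • x + (((Real.sin s : ℝ) : ℂ) * c) • y)
      = Real.cos s ^ 2 * qf M x + Real.sin s ^ 2 * qf M y
        + 2 * (Real.cos s * Real.sin s) * (c * sf M x y).re := by
  rw [qf_expand hM]
  have h1 : ‖((Real.cos s : ℝ) : ℂ)‖ ^ 2 = Real.cos s ^ 2 := by
    rw [Complex.norm_real]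
    exact sq_abs _
  have h2 : ‖((Real.sin s : ℝ) : ℂ) * c‖ ^ 2 = Real.sin s ^ 2 := by
    rw [norm_mul, Complex.norm_real, hc, mul_one]
    exact sq_abs _
  have h3 : (starRingEnd ℂ ((Real.cos s : ℝ) : ℂ) * (((Real.sin s : ℝ) : ℂ) * c) * sf M x y).re
      = Real.cos s * Real.sin s * (c * sf M x y).re := by
    rw [Complex.conj_ofReal]
    have : ((Real.cos s : ℝ) : ℂ) * (((Real.sin s : ℝ) : ℂ) * c) * sf M x y
        = ((Real.cos s * Real.sin s : ℝ) : ℂ) * (c * sf M x y) := by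
      push_cast; ring
    rw [this, Complex.re_ofReal_mul]
  rw [h1, h2, h3]
  ring

/-- The key path/intermediate-value lemma (Toeplitz–Hausdorff style): among unit
vectors with a common `K`-value, all intermediate `H`-values are attained. -/
lemma lemA {H K : Matrix n n ℂ} (hH : H.IsHermitian) (hK : K.IsHermitian)
    (x y : n → ℂ) (hx : qf 1 x = 1) (hy : qf 1 y = 1) (hKxy : qf K x = qf K y)
    {r : ℝ} (hr : r ∈ Set.uIcc (qf H x) (qf H y)) :
    ∃ v : n → ℂ, qf 1 v = 1 ∧ qf K v = qf K x ∧ qf H v = r := by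
  classical
  set k : ℝ := qf K x with hk
  set K' : Matrix n n ℂ := K + ((-k : ℝ) : ℂ) • (1 : Matrix n n ℂ) with hK'def
  have hK' : K'.IsHermitian := by
    unfold Matrix.IsHermitian
    rw [hK'def, Matrix.conjTranspose_add, Matrix.conjTranspose_smul, hK,
      Matrix.conjTranspose_one]
    congr 1
    simp [Complex.conj_ofReal]
  have hqfK' : ∀ z : n → ℂ, qf K' z = qf K z + (-k) * qf 1 z := by
    intro z
    rw [hK'def, qf_matrix_add, qf_matrix_smul]
  have hK'x : qf K' x = 0 := by rw [hqfK', hx]; ring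
  have hK'y : qf K' y = 0 := by rw [hqfK', hy, ← hKxy]; ring
  obtain ⟨c, hc1, hcβ, hcδ⟩ := choose_c (sf K' x y) (sf (1 : Matrix n n ℂ) x y)
  set u : ℝ → n → ℂ :=
    fun s => (Real.cos s : ℂ) • x + (((Real.sin s : ℝ) : ℂ) * c) • y with hu
  have hone : (1 : Matrix n n ℂ).IsHermitian := Matrix.isHermitian_one
  have hden : ∀ s, qf 1 (u s)
      = 1 + 2 * (Real.cos s * Real.sin s) * (c * sf (1 : Matrix n n ℂ) x y).re := by
    intro s
    rw [hu]
    rw [qf_u hone c hc1 x y s, hx, hy]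
    have := Real.sin_sq_add_cos_sq s
    linarith
  have hdenpos : ∀ s ∈ Set.Icc (0 : ℝ) (Real.pi / 2), 0 < qf 1 (u s) := by
    intro s hs
    rw [hden s]
    have hcos : 0 ≤ Real.cos s := by
      apply Real.cos_nonneg_of_mem_Icc
      constructor
      · linarith [hs.1, Real.pi_pos]
      · exact hs.2
    have hsin : 0 ≤ Real.sin s := by
      apply Real.sin_nonneg_of_nonneg_of_le_pi hs.1
      linarith [hs.2, Real.pi_pos]
    have : 0 ≤ Real.cos s * Real.sin s * (c * sf (1 : Matrix n n ℂ) x y).re :=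
      mul_nonneg (mul_nonneg hcos hsin) hcδ
    linarith
  have hK'u : ∀ s, qf K' (u s) = 0 := by
    intro s
    rw [hu, qf_u hK' c hc1 x y s, hK'x, hK'y, hcβ]
    ring
  set f : ℝ → ℝ := fun s => qf H (u s) / qf 1 (u s) with hf
  have hcont : ContinuousOn f (Set.uIcc 0 (Real.pi / 2)) := by
    have hpi2 : (0 : ℝ) ≤ Real.pi / 2 := by positivity
    rw [Set.uIcc_of_le hpi2]
    have hnum : Continuous fun s => qf H (u s) := by
      have : (fun s => qf H (u s)) = fun s =>
          Real.cos s ^ 2 * qf H x + Real.sin s ^ 2 * qf H y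
            + 2 * (Real.cos s * Real.sin s) * (c * sf H x y).re := by
        funext s
        rw [hu, qf_u hH c hc1 x y s]
      rw [this]
      fun_prop
    have hden' : Continuous fun s => qf 1 (u s) := by
      have : (fun s => qf (1 : Matrix n n ℂ) (u s)) = fun s =>
          1 + 2 * (Real.cos s * Real.sin s) * (c * sf (1 : Matrix n n ℂ) x y).re := by
        funext s
        exact hden s
      rw [this]
      fun_prop
    exact ContinuousOn.div hnum.continuousOn hden'.continuousOn
      fun s hs => (hdenpos s hs).ne'
  have hu0 : u 0 = x := by
    rw [hu]
    simp
  have hupi : u (Real.pi / 2) = c • y := by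
    rw [hu]
    simp
  have hf0 : f 0 = qf H x := by
    simp only [hf]
    rw [hu0, hx, div_one]
  have hfpi : f (Real.pi / 2) = qf H y := by
    simp only [hf]
    rw [hupi, qf_smul, qf_smul, hc1, hy]
    simp
  have hrmem : r ∈ Set.uIcc (f 0) (f (Real.pi / 2)) := by
    rw [hf0, hfpi]; exact hr
  obtain ⟨s0, hs0mem, hfs0⟩ := intermediate_value_uIcc hcont hrmem
  have hs0 : s0 ∈ Set.Icc (0 : ℝ) (Real.pi / 2) := by
    rwa [Set.uIcc_of_le (by positivity : (0:ℝ) ≤ Real.pi / 2)] at hs0mem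
  set m := qf 1 (u s0) with hm
  have hmpos : 0 < m := hdenpos s0 hs0
  set v : n → ℂ := (((Real.sqrt m)⁻¹ : ℝ) : ℂ) • u s0 with hv
  have hnv : ‖(((Real.sqrt m)⁻¹ : ℝ) : ℂ)‖ ^ 2 = m⁻¹ := by
    rw [Complex.norm_real, Real.norm_eq_abs,
      _root_.abs_of_nonneg (inv_nonneg.mpr (Real.sqrt_nonneg m)), inv_pow,
      Real.sq_sqrt hmpos.le]
  have hqv : ∀ M : Matrix n n ℂ, qf M v = m⁻¹ * qf M (u s0) := by
    intro M
    rw [hv, qf_smul, hnv]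
  refine ⟨v, ?_, ?_, ?_⟩
  · rw [hqv, ← hm, inv_mul_cancel₀ hmpos.ne']
  · have h1 : qf K' v = 0 := by rw [hqv, hK'u, mul_zero]
    have h2 := hqfK' v
    have h3 : qf 1 v = 1 := by rw [hqv, ← hm, inv_mul_cancel₀ hmpos.ne']
    rw [h1, h3] at h2
    linarith
  · simp only [hf] at hfs0
    rw [hqv, ← hfs0, div_eq_inv_mul]

lemma smul_isHermitian {M : Matrix n n ℂ} (hM : M.IsHermitian) (a : ℝ) :
    ((a : ℂ) • M).IsHermitian := by
  unfold Matrix.IsHermitian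
  rw [Matrix.conjTranspose_smul, hM]
  congr 1
  simp [Complex.conj_ofReal]

lemma convex_comb_mem_uIcc (a b t : ℝ) (ht0 : 0 ≤ t) (ht1 : t ≤ 1) :
    (1 - t) * a + t * b ∈ Set.uIcc a b := by
  rcases le_total a b with h | h
  · rw [Set.uIcc_of_le h]
    constructor <;> nlinarith
  · rw [Set.uIcc_of_ge h]
    constructor <;> nlinarith

/-- Two-point convexity of the joint numerical range of two Hermitian forms. -/
lemma lemB {H K : Matrix n n ℂ} (hH : H.IsHermitian) (hK : K.IsHermitian)
    (x y : n → ℂ) (hx : qf 1 x = 1) (hy : qf 1 y = 1)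
    (t : ℝ) (ht0 : 0 ≤ t) (ht1 : t ≤ 1) :
    ∃ v : n → ℂ, qf 1 v = 1 ∧ qf H v = (1 - t) * qf H x + t * qf H y ∧
      qf K v = (1 - t) * qf K x + t * qf K y := by
  set d1 : ℝ := qf H x - qf H y with hd1
  set d2 : ℝ := qf K x - qf K y with hd2
  by_cases hd : d1 = 0 ∧ d2 = 0
  · refine ⟨x, hx, ?_, ?_⟩
    · have : qf H x = qf H y := by linarith [hd.1, hd1.ge]
      rw [← this]; ring
    · have : qf K x = qf K y := by
        have := hd.2
        rw [hd2] at this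
        linarith
      rw [← this]; ring
  · have h0 : 0 < d1 ^ 2 + d2 ^ 2 := by
      rcases not_and_or.mp hd with h | h
      · have : d1 ≠ 0 := h
        positivity
      · have : d2 ≠ 0 := h
        positivity
    have hrpos : 0 < Real.sqrt (d1 ^ 2 + d2 ^ 2) := Real.sqrt_pos.mpr h0
    set ρ : ℝ := Real.sqrt (d1 ^ 2 + d2 ^ 2) with hρ
    set α : ℝ := d1 / ρ with hα
    set β : ℝ := d2 / ρ with hβ
    have hαβ : α ^ 2 + β ^ 2 = 1 := by
      rw [hα, hβ, div_pow, div_pow, ← add_div, hρ, Real.sq_sqrt h0.le]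
      exact div_self h0.ne'
    set H' : Matrix n n ℂ := (α : ℂ) • H + (β : ℂ) • K with hH'def
    set K' : Matrix n n ℂ := ((-β : ℝ) : ℂ) • H + (α : ℂ) • K with hK'def
    have hH' : H'.IsHermitian := (smul_isHermitian hH α).add (smul_isHermitian hK β)
    have hK' : K'.IsHermitian := (smul_isHermitian hH (-β)).add (smul_isHermitian hK α)
    have hqH' : ∀ z : n → ℂ, qf H' z = α * qf H z + β * qf K z := by
      intro z; rw [hH'def, qf_matrix_add, qf_matrix_smul, qf_matrix_smul]
    have hqK' : ∀ z : n → ℂ, qf K' z = -β * qf H z + α * qf K z := by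
      intro z; rw [hK'def, qf_matrix_add, qf_matrix_smul, qf_matrix_smul]
    have hKeq : qf K' x = qf K' y := by
      rw [hqK', hqK']
      have h1 : qf H x = qf H y + d1 := by rw [hd1]; ring
      have h2 : qf K x = qf K y + d2 := by rw [hd2]; ring
      rw [h1, h2, hα, hβ]
      field_simp
      ring
    have hrmem : (1 - t) * qf H' x + t * qf H' y ∈ Set.uIcc (qf H' x) (qf H' y) :=
      convex_comb_mem_uIcc _ _ t ht0 ht1
    obtain ⟨v, hv1, hvK, hvH⟩ := lemA hH' hK' x y hx hy hKeq hrmem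
    refine ⟨v, hv1, ?_, ?_⟩
    · have e1 : qf H v = α * qf H' v - β * qf K' v := by
        rw [hqH', hqK']; linear_combination (-(qf H v)) * hαβ
      have e2 : qf H x = α * qf H' x - β * qf K' x := by
        rw [hqH', hqK']; linear_combination (-(qf H x)) * hαβ
      have e3 : qf H y = α * qf H' y - β * qf K' y := by
        rw [hqH', hqK']; linear_combination (-(qf H y)) * hαβ
      rw [e1, e2, e3, hvH, hvK, hKeq]
      ring
    · have e1 : qf K v = β * qf H' v + α * qf K' v := by
        rw [hqH', hqK']; linear_combination (-(qf K v)) * hαβ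
      have e2 : qf K x = β * qf H' x + α * qf K' x := by
        rw [hqH', hqK']; linear_combination (-(qf K x)) * hαβ
      have e3 : qf K y = β * qf H' y + α * qf K' y := by
        rw [hqH', hqK']; linear_combination (-(qf K y)) * hαβ
      rw [e1, e2, e3, hvH, hvK, hKeq]
      ring

lemma qf_one_nonneg (x : n → ℂ) : 0 ≤ qf 1 x := by
  rw [qf_one]
  positivity

lemma qf_one_eq_zero_iff (x : n → ℂ) (h : qf 1 x = 0) : x = 0 := by
  rw [qf_one] at h
  funext i
  have h2 := (Finset.sum_eq_zero_iff_of_nonneg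
    (fun i _ => by positivity : ∀ i ∈ Finset.univ, (0:ℝ) ≤ ‖x i‖ ^ 2)).mp h i (Finset.mem_univ i)
  have : ‖x i‖ = 0 := by
    nlinarith [norm_nonneg (x i)]
  simpa using norm_eq_zero.mp this

/-- Merging two vectors into one while preserving both quadratic forms and the norm. -/
lemma lemC {H K : Matrix n n ℂ} (hH : H.IsHermitian) (hK : K.IsHermitian)
    (x y : n → ℂ) :
    ∃ v : n → ℂ, qf 1 v = qf 1 x + qf 1 y ∧ qf H v = qf H x + qf H y ∧
      qf K v = qf K x + qf K y := by
  by_cases hx0 : qf 1 x = 0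
  · refine ⟨y, ?_, ?_, ?_⟩ <;>
      rw [qf_one_eq_zero_iff x hx0] <;> rw [qf_zero_vec] <;> ring
  by_cases hy0 : qf 1 y = 0
  · refine ⟨x, ?_, ?_, ?_⟩ <;>
      rw [qf_one_eq_zero_iff y hy0] <;> rw [qf_zero_vec] <;> ring
  have hpx : 0 < qf 1 x := lt_of_le_of_ne (qf_one_nonneg x) (Ne.symm hx0)
  have hpy : 0 < qf 1 y := lt_of_le_of_ne (qf_one_nonneg y) (Ne.symm hy0)
  set px := qf 1 x with hpxd
  set py := qf 1 y with hpyd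
  set xh : n → ℂ := (((Real.sqrt px)⁻¹ : ℝ) : ℂ) • x with hxh
  set yh : n → ℂ := (((Real.sqrt py)⁻¹ : ℝ) : ℂ) • y with hyh
  have hnormsq : ∀ p : ℝ, 0 < p → ‖(((Real.sqrt p)⁻¹ : ℝ) : ℂ)‖ ^ 2 = p⁻¹ := by
    intro p hp
    rw [Complex.norm_real, Real.norm_eq_abs,
      _root_.abs_of_nonneg (inv_nonneg.mpr (Real.sqrt_nonneg p)), inv_pow,
      Real.sq_sqrt hp.le]
  have hqxh : ∀ M : Matrix n n ℂ, qf M xh = px⁻¹ * qf M x := by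
    intro M; rw [hxh, qf_smul, hnormsq px hpx]
  have hqyh : ∀ M : Matrix n n ℂ, qf M yh = py⁻¹ * qf M y := by
    intro M; rw [hyh, qf_smul, hnormsq py hpy]
  have hxh1 : qf 1 xh = 1 := by rw [hqxh, ← hpxd, inv_mul_cancel₀ hpx.ne']
  have hyh1 : qf 1 yh = 1 := by rw [hqyh, ← hpyd, inv_mul_cancel₀ hpy.ne']
  set t : ℝ := py / (px + py) with htd
  have hsum : 0 < px + py := by linarith
  have ht0 : 0 ≤ t := by positivity
  have ht1 : t ≤ 1 := by
    rw [htd, div_le_one hsum]; linarith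
  obtain ⟨u, hu1, huH, huK⟩ := lemB hH hK xh yh hxh1 hyh1 t ht0 ht1
  have h1t : 1 - t = px / (px + py) := by
    rw [htd]; field_simp; ring
  refine ⟨(((Real.sqrt (px + py)) : ℝ) : ℂ) • u, ?_, ?_, ?_⟩
  · rw [qf_smul]
    have : ‖(((Real.sqrt (px + py)) : ℝ) : ℂ)‖ ^ 2 = px + py := by
      rw [Complex.norm_real, Real.norm_eq_abs,
        _root_.abs_of_nonneg (Real.sqrt_nonneg _), Real.sq_sqrt hsum.le]
    rw [this, hu1, mul_one]
  · rw [qf_smul]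
    have : ‖(((Real.sqrt (px + py)) : ℝ) : ℂ)‖ ^ 2 = px + py := by
      rw [Complex.norm_real, Real.norm_eq_abs,
        _root_.abs_of_nonneg (Real.sqrt_nonneg _), Real.sq_sqrt hsum.le]
    rw [this, huH, h1t, htd, hqxh, hqyh]
    field_simp
  · rw [qf_smul]
    have : ‖(((Real.sqrt (px + py)) : ℝ) : ℂ)‖ ^ 2 = px + py := by
      rw [Complex.norm_real, Real.norm_eq_abs,
        _root_.abs_of_nonneg (Real.sqrt_nonneg _), Real.sq_sqrt hsum.le]
    rw [this, huK, h1t, htd, hqxh, hqyh]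
    field_simp

/-- Merging finitely many vectors into one. -/
lemma lemD {H K : Matrix n n ℂ} (hH : H.IsHermitian) (hK : K.IsHermitian)
    (m : ℕ) (w : Fin m → n → ℂ) :
    ∃ v : n → ℂ, qf 1 v = ∑ j, qf 1 (w j) ∧ qf H v = ∑ j, qf H (w j) ∧
      qf K v = ∑ j, qf K (w j) := by
  induction m with
  | zero => exact ⟨0, by simp [qf_zero_vec], by simp [qf_zero_vec], by simp [qf_zero_vec]⟩
  | succ m ih =>
    obtain ⟨v', h1, h2, h3⟩ := ih (fun j => w j.succ)
    obtain ⟨v, g1, g2, g3⟩ := lemC hH hK (w 0) v'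
    refine ⟨v, ?_, ?_, ?_⟩ <;>
      rw [Fin.sum_univ_succ]
    · rw [g1, h1]
    · rw [g2, h2]
    · rw [g3, h3]

lemma trace_decomp (B M : Matrix n n ℂ) :
    (Bᴴ * B * M).trace = ∑ j, sf M (fun k => star (B j k)) (fun k => star (B j k)) := by
  have h1 : (Bᴴ * B * M).trace = (B * M * Bᴴ).trace := by
    rw [Matrix.mul_assoc, Matrix.trace_mul_comm, Matrix.mul_assoc]
  rw [h1]
  unfold sf
  simp only [Matrix.trace, Matrix.diag, Matrix.mul_apply, Matrix.conjTranspose_apply,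
    dotProduct, Matrix.mulVec, Pi.star_apply, star_star, Finset.sum_mul,
    Finset.mul_sum]
  refine Finset.sum_congr rfl fun j _ => ?_
  rw [Finset.sum_comm]
  refine Finset.sum_congr rfl fun i _ => ?_
  refine Finset.sum_congr rfl fun k _ => ?_
  ring

lemma re_trace_decomp (B M : Matrix n n ℂ) :
    ((Bᴴ * B * M).trace).re = ∑ j, qf M (fun k => star (B j k)) := by
  rw [trace_decomp, Complex.re_sum]
  rfl

open scoped MatrixOrder in
lemma psd_eq_ct_mul_self {N : ℕ} {V : Matrix (Fin N) (Fin N) ℂ} (hV : V.PosSemidef) :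
    ∃ B : Matrix (Fin N) (Fin N) ℂ, V = Bᴴ * B := by
  obtain ⟨B, rfl⟩ := CStarAlgebra.nonneg_iff_eq_star_mul_self.mp hV.nonneg
  exact ⟨B, rfl⟩

end Aux

/-- Theorem 1 of the paper: the feasibility system of the relaxed SDP
(downlink energy beamforming) admits a rank-one solution `V = v vᴴ`. -/
theorem sdp_rank_one_feasibility
    (N : ℕ) (hN : 1 ≤ N)
    (Mt Mr : Matrix (Fin N) (Fin N) ℂ)
    (hMt : Mt.PosSemidef) (hMr : Mr.PosSemidef)
    (ct cr PA : ℝ) (hct : 0 < ct) (hcr : 0 < cr) (hPA : 0 < PA)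
    (hfeas : ∃ V : Matrix (Fin N) (Fin N) ℂ, V.PosSemidef ∧
      V.trace.re ≤ PA ∧ ct ≤ ((V * Mt).trace).re ∧ cr ≤ ((V * Mr).trace).re) :
    ∃ v : Fin N → ℂ, (∑ i, ‖v i‖ ^ 2) ≤ PA ∧
      ct ≤ (star v ⬝ᵥ Mt.mulVec v).re ∧
      cr ≤ (star v ⬝ᵥ Mr.mulVec v).re := by
  obtain ⟨V, hV, htr, htt, hrr⟩ := hfeas
  obtain ⟨B, hB⟩ := psd_eq_ct_mul_self hV
  subst hB
  set w : Fin N → Fin N → ℂ := fun j => (fun k => star (B j k)) with hw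
  obtain ⟨v, h1, h2, h3⟩ := lemD hMt.isHermitian hMr.isHermitian N w
  have e1 : ∑ j, qf 1 (w j) = ((Bᴴ * B).trace).re := by
    rw [← Matrix.mul_one (Bᴴ * B), re_trace_decomp]
  have e2 : ∑ j, qf Mt (w j) = ((Bᴴ * B * Mt).trace).re := (re_trace_decomp B Mt).symm
  have e3 : ∑ j, qf Mr (w j) = ((Bᴴ * B * Mr).trace).re := (re_trace_decomp B Mr).symm
  refine ⟨v, ?_, ?_, ?_⟩
  · rw [← qf_one, h1, e1]
    exact htr
  · have : qf Mt v = (star v ⬝ᵥ Mt.mulVec v).re := rfl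
    rw [← this, h2, e2]
    exact htt
  · have : qf Mr v = (star v ⬝ᵥ Mr.mulVec v).re := rfl
    rw [← this, h3, e3]
    exact hrr
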